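/- arXiv:1601.08013 — 2 statements merged into one kernel-verified Lean document; each statement's English description precedes it below -/
import Mathlib

section
/- Let H ∈ (0, 1/2). There exists a constant C > 0 depending only on H such that for all h ∈ ℝ and all t > 0, ∫_0^t ∫_ℝ (1 - cos(hξ)) e^{-sξ²} |ξ|^{1-2H} dξ ds ≤ C |h|^{2H}. -/
open MeasureTheory Real Set

private noncomputable def shK (H : ℝ) (h : ℝ) : ℝ → ℝ :=
  fun ξ => min 2 (h ^ 2 * ξ ^ 2) * |ξ| ^ (-1 - 2 * H)

private lemma shK_nonneg (H h ξ : ℝ) : 0 ≤ shK H h ξ :=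
  mul_nonneg (le_min zero_le_two (by positivity)) (Real.rpow_nonneg (abs_nonneg _) _)

private lemma shK_meas (H h : ℝ) : Measurable (shK H h) :=
  (measurable_const.min ((measurable_const.mul (measurable_id.pow_const 2))))
    |>.mul ((measurable_id.abs).pow measurable_const)

private lemma one_sub_cos_le (x : ℝ) : 1 - Real.cos x ≤ min 2 (x ^ 2) := by
  refine le_min (by nlinarith [Real.neg_one_le_cos x]) ?_
  nlinarith [Real.one_sub_sq_div_two_le_cos (x := x), sq_nonneg x]

private lemma shK_one_integrable (H : ℝ) (h1 : 0 < H) (h2 : H < 1/2) :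
    Integrable (shK H 1) := by
  have hmeas : Measurable (shK H 1) := shK_meas H 1
  have hIoi : IntegrableOn (shK H 1) (Ioi 1) := by
    have base : IntegrableOn (fun x : ℝ => 2 * x ^ (-1 - 2 * H)) (Ioi 1) :=
      (integrableOn_Ioi_rpow_of_lt (by linarith) one_pos).const_mul 2
    refine base.mono' hmeas.aestronglyMeasurable.restrict ?_
    · filter_upwards [ae_restrict_mem measurableSet_Ioi] with x hx
      have hx1 : (1:ℝ) < x := hx
      rw [Real.norm_eq_abs, abs_of_nonneg (shK_nonneg H 1 x)]
      have : |x| = x := abs_of_pos (by linarith)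
      rw [shK , this]
      exact mul_le_mul_of_nonneg_right (min_le_left _ _)
        (Real.rpow_nonneg (by linarith) _)
  have hIcc : IntegrableOn (shK H 1) (Icc (-1) 1) := by
    refine Measure.integrableOn_of_bounded (measure_Icc_lt_top).ne hmeas.aestronglyMeasurable (M := 1) ?_
    filter_upwards [ae_restrict_mem measurableSet_Icc] with x hx
    rw [Real.norm_eq_abs, abs_of_nonneg (shK_nonneg H 1 x)]
    have hx1 : |x| ≤ 1 := abs_le.2 ⟨hx.1, hx.2⟩
    have hsq : x ^ 2 ≤ 2 := by nlinarith [sq_abs x, abs_nonneg x]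
    have : shK H 1 x = |x| ^ 2 * |x| ^ (-1 - 2 * H) := by
      rw [shK, min_eq_right (by nlinarith [abs_nonneg x] : (1:ℝ)^2 * x^2 ≤ 2), one_pow, one_mul,
        ← sq_abs]
    rw [this]
    rcases eq_or_ne x 0 with rfl | hx0
    · simp
    · have hpos : 0 < |x| := abs_pos.2 hx0
      have : |x| ^ 2 * |x| ^ (-1 - 2 * H) = |x| ^ (1 - 2 * H) := by
        rw [← Real.rpow_natCast |x| 2, ← Real.rpow_add hpos]
        congr 1
        push_cast
        ring
      rw [this]
      exact Real.rpow_le_one (abs_nonneg x) hx1 (by linarith)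
  have hIic : IntegrableOn (shK H 1) (Iic (-1)) := by
    have hIci : IntegrableOn (shK H 1) (Ici 1) :=
      (integrableOn_Ici_iff_integrableOn_Ioi).mpr hIoi
    have hmap : volume.restrict (Iic (-1:ℝ))
        = Measure.map Neg.neg (volume.restrict (Ici (1:ℝ))) := by
      conv_lhs => rw [← Measure.map_neg_eq_self (volume : Measure ℝ)]
      rw [measurableEmbedding_neg.restrict_map]
      congr 1
      ext x
      simp [neg_le]
    rw [IntegrableOn, hmap, measurableEmbedding_neg.integrable_map_iff]
    have hcomp : shK H 1 ∘ Neg.neg = shK H 1 := by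
      funext x; simp [shK, Function.comp, neg_sq]
    rw [hcomp]
    exact hIci
  have hcover : (univ : Set ℝ) ⊆ Iic (-1) ∪ (Icc (-1) 1 ∪ Ioi 1) := by
    intro x _
    rcases le_total x (-1) with h | h
    · exact Or.inl h
    · rcases lt_or_ge (1:ℝ) x with h' | h'
      · exact Or.inr (Or.inr h')
      · exact Or.inr (Or.inl ⟨h, h'⟩)
  rw [← integrableOn_univ]
  exact (hIic.union (hIcc.union hIoi)).mono_set hcover

private lemma shK_integral (H : ℝ) (h1 : 0 < H) (h2 : H < 1/2) (h : ℝ) :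
    Integrable (shK H h) ∧ ∫ ξ, shK H h ξ = |h| ^ (2 * H) * ∫ ξ, shK H 1 ξ := by
  rcases eq_or_ne h 0 with rfl | hne
  · have : shK H 0 = fun _ => 0 := by
      funext ξ; simp [shK]
    rw [this]
    constructor
    · exact integrable_zero _ _ _
    · simp [abs_zero, Real.zero_rpow (show (2:ℝ)*H ≠ 0 by positivity)]
  · have hpos : 0 < |h| := abs_pos.2 hne
    have key : shK H h = fun ξ => |h| ^ (1 + 2 * H) * shK H 1 (h * ξ) := by
      funext ξ
      have hmul : |h * ξ| ^ (-1 - 2 * H) = |h| ^ (-1 - 2 * H) * |ξ| ^ (-1 - 2 * H) := by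
        rw [abs_mul, Real.mul_rpow (abs_nonneg _) (abs_nonneg _)]
      have h1' : |h| ^ (1 + 2 * H) * |h| ^ (-1 - 2 * H) = 1 := by
        rw [← Real.rpow_add hpos]
        norm_num
      simp only [shK, mul_pow, hmul, one_pow, one_mul]
      linear_combination (-(min 2 (h ^ 2 * ξ ^ 2) * |ξ| ^ (-1 - 2 * H))) * h1'
    have hint : Integrable (shK H h) := by
      rw [key]
      exact ((shK_one_integrable H h1 h2).comp_mul_left' hne).const_mul _
    refine ⟨hint, ?_⟩
    rw [key]
    rw [MeasureTheory.integral_const_mul, MeasureTheory.Measure.integral_comp_mul_left (shK H 1) h,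
      smul_eq_mul, ← mul_assoc]
    congr 1
    rw [abs_inv, ← Real.rpow_neg_one |h|, ← Real.rpow_add hpos]
    ring_nf

theorem stmt_12 (H : ℝ) (hH : H ∈ Set.Ioo (0:ℝ) (1/2 : ℝ)) :
    ∃ C : ℝ, 0 < C ∧ ∀ h t : ℝ, 0 < t →
      ∫ s in (0:ℝ)..t, ∫ ξ : ℝ,
          (1 - Real.cos (h * ξ)) * Real.exp (-(s * ξ^2)) * |ξ| ^ (1 - 2*H)
        ≤ C * |h| ^ (2*H) := by
  obtain ⟨h1, h2⟩ := hH
  set C0 : ℝ := ∫ ξ, shK H 1 ξ with hC0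
  have hC0nn : 0 ≤ C0 := integral_nonneg fun ξ => shK_nonneg H 1 ξ
  refine ⟨C0 + 1, by linarith, fun h t ht => ?_⟩
  set f : ℝ → ℝ → ℝ := fun s ξ =>
    (1 - Real.cos (h * ξ)) * Real.exp (-(s * ξ^2)) * |ξ| ^ (1 - 2*H) with hf
  have fnn : ∀ s ξ, 0 ≤ f s ξ := fun s ξ =>
    mul_nonneg (mul_nonneg (sub_nonneg.2 (Real.cos_le_one _)) (Real.exp_pos _).le)
      (Real.rpow_nonneg (abs_nonneg _) _)
  have fcont : Continuous (Function.uncurry f) := by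
    refine ((continuous_const.sub
        (Real.continuous_cos.comp (continuous_const.mul continuous_snd))).mul
        (Real.continuous_exp.comp ((continuous_fst.mul (continuous_snd.pow 2)).neg))).mul
        ((continuous_snd.abs).rpow_const fun x => Or.inr (by linarith))
  -- the dominating function
  set G : ℝ → ℝ → ℝ := fun s ξ =>
    min 2 ((h * ξ) ^ 2) * Real.exp (-(s * ξ^2)) * |ξ| ^ (1 - 2*H) with hG
  have Gnn : ∀ s ξ, 0 ≤ G s ξ := fun s ξ =>
    mul_nonneg (mul_nonneg (le_min zero_le_two (by positivity)) (Real.exp_pos _).le)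
      (Real.rpow_nonneg (abs_nonneg _) _)
  have Gmeas : Measurable (Function.uncurry G) := by
    refine ((measurable_const.min
        (((measurable_const.mul measurable_snd).pow_const 2))).mul
        ((measurable_fst.mul (measurable_snd.pow_const 2)).neg.exp)).mul
        ((measurable_snd.abs).pow measurable_const)
  have fleG : ∀ s ξ, f s ξ ≤ G s ξ := by
    intro s ξ
    refine mul_le_mul_of_nonneg_right (mul_le_mul_of_nonneg_right ?_ (Real.exp_pos _).le)
      (Real.rpow_nonneg (abs_nonneg _) _)
    exact one_sub_cos_le (h * ξ)
  -- key computation for fixed nonzero ξ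
  have inner_eq : ∀ ξ : ℝ, ξ ≠ 0 →
      (∫⁻ s in Ioi (0:ℝ), ENNReal.ofReal (G s ξ)) = ENNReal.ofReal (shK H h ξ) := by
    intro ξ hξ
    have hb : (0:ℝ) < ξ ^ 2 := by positivity
    have habs : (0:ℝ) < |ξ| := abs_pos.2 hξ
    set A : ℝ := min 2 ((h * ξ) ^ 2) * |ξ| ^ (1 - 2*H) with hA
    have hAnn : 0 ≤ A :=
      mul_nonneg (le_min zero_le_two (by positivity)) (Real.rpow_nonneg (abs_nonneg _) _)
    have e1 : ∀ s : ℝ, G s ξ = A * Real.exp (-ξ^2 * s) := by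
      intro s
      simp only [hG, hA]
      rw [show -(s * ξ^2) = -ξ^2 * s from by ring]
      ring
    simp_rw [e1, ENNReal.ofReal_mul hAnn]
    rw [lintegral_const_mul' _ _ ENNReal.ofReal_ne_top]
    have hintexp : IntegrableOn (fun s : ℝ => Real.exp (-ξ^2 * s)) (Ioi 0) :=
      exp_neg_integrableOn_Ioi 0 hb
    rw [← ofReal_integral_eq_lintegral_ofReal hintexp
      (ae_of_all _ fun s => (Real.exp_pos _).le)]
    have hval : (∫ s in Ioi (0:ℝ), Real.exp (-ξ^2 * s)) = (ξ^2)⁻¹ := by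
      have := integral_comp_mul_left_Ioi (fun x => Real.exp (-x)) 0 hb
      simp only [mul_zero, neg_mul] at this ⊢
      rw [this, integral_exp_neg_Ioi_zero, smul_eq_mul, mul_one]
    rw [hval, ← ENNReal.ofReal_mul hAnn]
    congr 1
    have e2 : |ξ| ^ (1 - 2*H) * (ξ^2)⁻¹ = |ξ| ^ (-1 - 2*H) := by
      rw [← sq_abs, ← Real.rpow_natCast |ξ| 2, ← Real.rpow_neg (abs_nonneg ξ),
        ← Real.rpow_add habs]
      congr 1
      ring
    rw [hA, shK, mul_pow]
    calc min 2 ((h^2 * ξ^2)) * |ξ| ^ (1 - 2*H) * (ξ^2)⁻¹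
        = min 2 (h^2 * ξ^2) * (|ξ| ^ (1 - 2*H) * (ξ^2)⁻¹) := by ring
      _ = min 2 (h^2 * ξ^2) * |ξ| ^ (-1 - 2*H) := by rw [e2]
  -- now the main chain
  rw [intervalIntegral.integral_of_le ht.le]
  have Imeas : AEStronglyMeasurable (fun s => ∫ ξ, f s ξ) (volume.restrict (Ioc 0 t)) :=
    (fcont.stronglyMeasurable.integral_prod_right').aestronglyMeasurable
  rw [integral_eq_lintegral_of_nonneg_ae
    (ae_of_all _ fun s => integral_nonneg fun ξ => fnn s ξ) Imeas]
  have hCnn : (0:ℝ) ≤ (C0 + 1) * |h| ^ (2*H) := by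
    have := Real.rpow_nonneg (abs_nonneg h) (2*H)
    nlinarith
  refine ENNReal.toReal_le_of_le_ofReal hCnn ?_
  calc ∫⁻ s in Ioc (0:ℝ) t, ENNReal.ofReal (∫ ξ, f s ξ)
      ≤ ∫⁻ s in Ioc (0:ℝ) t, ∫⁻ ξ, ENNReal.ofReal (f s ξ) := by
        refine lintegral_mono fun s => ?_
        rw [integral_eq_lintegral_of_nonneg_ae (ae_of_all _ fun ξ => fnn s ξ)
          ((fcont.comp (Continuous.prodMk_right s)).aestronglyMeasurable)]
        exact ENNReal.ofReal_toReal_le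
    _ ≤ ∫⁻ s in Ioc (0:ℝ) t, ∫⁻ ξ, ENNReal.ofReal (G s ξ) := by
        refine lintegral_mono fun s => lintegral_mono fun ξ => ?_
        exact ENNReal.ofReal_le_ofReal (fleG s ξ)
    _ ≤ ∫⁻ s in Ioi (0:ℝ), ∫⁻ ξ, ENNReal.ofReal (G s ξ) :=
        lintegral_mono_set Ioc_subset_Ioi_self
    _ = ∫⁻ ξ, ∫⁻ s in Ioi (0:ℝ), ENNReal.ofReal (G s ξ) := by
        refine lintegral_lintegral_swap ?_
        exact (ENNReal.measurable_ofReal.comp Gmeas).aemeasurable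
    _ = ∫⁻ ξ, ENNReal.ofReal (shK H h ξ) := by
        refine lintegral_congr_ae ?_
        filter_upwards [compl_mem_ae_iff.2 (volume_singleton (a := (0:ℝ)))] with ξ hξ
        exact inner_eq ξ hξ
    _ = ENNReal.ofReal (∫ ξ, shK H h ξ) :=
        (ofReal_integral_eq_lintegral_ofReal (shK_integral H h1 h2 h).1
          (ae_of_all _ fun ξ => shK_nonneg H h ξ)).symm
    _ ≤ ENNReal.ofReal ((C0 + 1) * |h| ^ (2*H)) := by
        refine ENNReal.ofReal_le_ofReal ?_
        rw [(shK_integral H h1 h2 h).2, ← hC0]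
        have := Real.rpow_nonneg (abs_nonneg h) (2*H)
        nlinarith
end

section
/- Let H ∈ (0, 1/2). There exists a constant C > 0 depending only on H and T such that for all h ∈ ℝ and all t ∈ (0, T], ∫_0^t ∫_ℝ (1 - cos(hξ)) · (sin((t-s)|ξ|)/|ξ|)² |ξ|^{1-2H} dξ ds ≤ C |h|^{2H}. -/
open MeasureTheory Real

theorem stmt_13 (H T : ℝ) (hH : H ∈ Set.Ioo (0:ℝ) (1/2 : ℝ)) (hT : 0 < T) :
    ∃ C : ℝ, 0 < C ∧ ∀ h : ℝ, ∀ t ∈ Set.Ioc (0:ℝ) T,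
      ∫ s in (0:ℝ)..t, ∫ ξ : ℝ,
          (1 - Real.cos (h * ξ)) * (Real.sin ((t-s) * |ξ|) / |ξ|)^2 * |ξ| ^ (1 - 2*H)
        ≤ C * |h| ^ (2*H) := by
  obtain ⟨hH0, hH12⟩ := hH
  have h2H : 0 < 2 - 2*H := by linarith
  set K : ℝ := 2/(2-2*H) + 2/H with hKdef
  have hK : 0 < K := add_pos (div_pos two_pos h2H) (div_pos two_pos hH0)
  refine ⟨K * T, mul_pos hK hT, ?_⟩
  rintro h t ⟨ht0, htT⟩
  by_cases hh : h = 0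
  · subst hh
    have : (2*H) ≠ 0 := by positivity
    simp [Real.zero_rpow this]
  have hha : 0 < |h| := abs_pos.mpr hh
  set R : ℝ := |h|⁻¹ with hRdef
  have hR : 0 < R := by positivity
  set f : ℝ → ℝ := fun x => if x ≤ R then h^2 * x^(1-2*H) else 2 * x^(-1-2*H) with hfdef
  -- integrability of the pieces
  have hint1 : IntegrableOn f (Set.Ioc 0 R) := by
    have h1 : IntegrableOn (fun x : ℝ => h^2 * x^(1-2*H)) (Set.Ioc 0 R) := by
      have := (intervalIntegral.intervalIntegrable_rpow' (a := 0) (b := R)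
        (r := 1-2*H) (by linarith)).const_mul (h^2)
      exact (intervalIntegrable_iff_integrableOn_Ioc_of_le hR.le).mp this
    exact h1.congr_fun (fun x hx => (if_pos hx.2).symm) measurableSet_Ioc
  have hint2 : IntegrableOn f (Set.Ioi R) := by
    have h1 : IntegrableOn (fun x : ℝ => 2 * x^(-1-2*H)) (Set.Ioi R) :=
      (integrableOn_Ioi_rpow_of_lt (by linarith) hR).const_mul 2
    exact h1.congr_fun (fun x hx => (if_neg (not_le.mpr hx)).symm) measurableSet_Ioi
  have hintIoi : IntegrableOn f (Set.Ioi 0) := by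
    rw [← Set.Ioc_union_Ioi_eq_Ioi hR.le]
    exact hint1.union hint2
  -- integrability of the comparison function ξ ↦ f |ξ|
  have hB : Integrable (fun ξ : ℝ => f |ξ|) := by
    have hpos : IntegrableOn (fun ξ : ℝ => f |ξ|) (Set.Ioi 0) := by
      refine hintIoi.congr_fun (fun x hx => ?_) measurableSet_Ioi
      rw [abs_of_pos hx]
    have hneg : IntegrableOn (fun ξ : ℝ => f |ξ|) (Set.Iic 0) := by
      rw [← Measure.map_neg_eq_self (volume : Measure ℝ)]
      have m : MeasurableEmbedding fun x : ℝ => -x := (Homeomorph.neg ℝ).measurableEmbedding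
      rw [m.integrableOn_map_iff]
      simp_rw [Function.comp_def, abs_neg, Set.neg_preimage, Set.neg_Iic, neg_zero]
      exact Iff.mpr integrableOn_Ici_iff_integrableOn_Ioi hpos
    have := hneg.union hpos
    rwa [Set.Iic_union_Ioi, integrableOn_univ] at this
  -- value of the comparison integral
  have hr1 : R^(2-2*H) = |h|^(-(2-2*H)) := by
    rw [hRdef, Real.inv_rpow (abs_nonneg h), ← Real.rpow_neg (abs_nonneg h)]
  have hval : ∫ ξ : ℝ, f |ξ| = K * |h|^(2*H) := by
    rw [integral_comp_abs (f := f)]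
    rw [← Set.Ioc_union_Ioi_eq_Ioi hR.le,
      setIntegral_union (Set.Ioc_disjoint_Ioi le_rfl) measurableSet_Ioi hint1 hint2]
    have e1 : ∫ x in Set.Ioc 0 R, f x = h^2 * (R^(2-2*H)/(2-2*H)) := by
      rw [setIntegral_congr_fun measurableSet_Ioc (fun x hx => if_pos hx.2),
        MeasureTheory.integral_const_mul, ← intervalIntegral.integral_of_le hR.le,
        integral_rpow (Or.inl (by linarith))]
      have hex : 1 - 2*H + 1 = 2 - 2*H := by ring
      rw [hex, Real.zero_rpow (ne_of_gt h2H)]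
      ring
    have e2 : ∫ x in Set.Ioi R, f x = 2 * (R^(-(2*H))/(2*H)) := by
      rw [setIntegral_congr_fun measurableSet_Ioi (fun x hx => if_neg (not_le.mpr hx)),
        MeasureTheory.integral_const_mul, integral_Ioi_rpow_of_lt (by linarith) hR]
      have hex : -1 - 2*H + 1 = -(2*H) := by ring
      rw [hex, neg_div_neg_eq]
    rw [e1, e2]
    have hA : h^2 * R^(2-2*H) = |h|^(2*H) := by
      rw [hr1, ← sq_abs h, ← Real.rpow_natCast |h| 2, ← Real.rpow_add hha]
      congr 1
      push_cast
      ring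
    have hB2 : R^(-(2*H)) = |h|^(2*H) := by
      rw [hRdef, Real.inv_rpow (abs_nonneg h), ← Real.rpow_neg (abs_nonneg h), neg_neg]
    have hA' : h^2 * (R^(2-2*H)/(2-2*H)) = |h|^(2*H)/(2-2*H) := by
      rw [← hA]; ring
    rw [hA', hB2, hKdef]
    field_simp
  -- pointwise bound
  have key : ∀ s : ℝ, ∀ ξ : ℝ,
      (1 - Real.cos (h * ξ)) * (Real.sin ((t-s) * |ξ|) / |ξ|)^2 * |ξ| ^ (1 - 2*H) ≤ f |ξ| := by
    intro s ξ
    by_cases hxi : ξ = 0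
    · subst hxi
      simp only [mul_zero, Real.cos_zero, sub_self, zero_mul, abs_zero, hfdef]
      rw [if_pos hR.le, Real.zero_rpow (by linarith : (1:ℝ) - 2*H ≠ 0), mul_zero]
    · have hxa : 0 < |ξ| := abs_pos.mpr hxi
      have hx2 : (0:ℝ) < ξ^2 := by positivity
      have hsin : (Real.sin ((t-s) * |ξ|) / |ξ|)^2 ≤ 1/ξ^2 := by
        rw [div_pow, sq_abs]
        gcongr
        exact Real.sin_sq_le_one _
      have hsn : 0 ≤ (Real.sin ((t-s) * |ξ|) / |ξ|)^2 := sq_nonneg _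
      have hrn : (0:ℝ) ≤ |ξ| ^ (1 - 2*H) := Real.rpow_nonneg (abs_nonneg ξ) _
      by_cases hxR : |ξ| ≤ R
      · rw [hfdef]
        simp only [if_pos hxR]
        have hcos : 1 - Real.cos (h*ξ) ≤ h^2*ξ^2 := by
          have := Real.one_sub_sq_div_two_le_cos (x := h*ξ)
          nlinarith [sq_nonneg (h*ξ)]
        have h1 : (1 - Real.cos (h*ξ)) * (Real.sin ((t-s) * |ξ|) / |ξ|)^2 ≤ h^2 := by
          calc (1 - Real.cos (h*ξ)) * (Real.sin ((t-s) * |ξ|) / |ξ|)^2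
              ≤ (h^2*ξ^2) * (1/ξ^2) := mul_le_mul hcos hsin hsn (by positivity)
            _ = h^2 := by field_simp
        exact mul_le_mul_of_nonneg_right h1 hrn
      · rw [hfdef]
        simp only [if_neg hxR]
        have hcos : 1 - Real.cos (h*ξ) ≤ 2 := by linarith [Real.neg_one_le_cos (h*ξ)]
        have h1 : (1 - Real.cos (h*ξ)) * (Real.sin ((t-s) * |ξ|) / |ξ|)^2 ≤ 2 * (1/ξ^2) :=
          mul_le_mul hcos hsin hsn (by norm_num)
        calc (1 - Real.cos (h*ξ)) * (Real.sin ((t-s) * |ξ|) / |ξ|)^2 * |ξ| ^ (1 - 2*H)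
            ≤ (2 * (1/ξ^2)) * |ξ| ^ (1 - 2*H) := mul_le_mul_of_nonneg_right h1 hrn
          _ = 2 * |ξ| ^ (-1-2*H) := by
            rw [mul_assoc]
            congr 1
            rw [← sq_abs ξ, one_div, ← Real.rpow_natCast |ξ| 2,
              ← Real.rpow_neg (abs_nonneg ξ), ← Real.rpow_add hxa]
            congr 1
            push_cast
            ring
  have hnonneg : ∀ s : ℝ, ∀ ξ : ℝ, 0 ≤
      (1 - Real.cos (h * ξ)) * (Real.sin ((t-s) * |ξ|) / |ξ|)^2 * |ξ| ^ (1 - 2*H) := by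
    intro s ξ
    exact mul_nonneg (mul_nonneg (by linarith [Real.cos_le_one (h*ξ)]) (sq_nonneg _))
      (Real.rpow_nonneg (abs_nonneg ξ) _)
  -- inner integral bound
  have hinner : ∀ s : ℝ, ‖∫ ξ : ℝ,
      (1 - Real.cos (h * ξ)) * (Real.sin ((t-s) * |ξ|) / |ξ|)^2 * |ξ| ^ (1 - 2*H)‖
        ≤ K * |h|^(2*H) := by
    intro s
    rw [Real.norm_eq_abs, abs_of_nonneg (integral_nonneg (hnonneg s))]
    calc (∫ ξ : ℝ, (1 - Real.cos (h * ξ)) * (Real.sin ((t-s) * |ξ|) / |ξ|)^2 * |ξ| ^ (1 - 2*H))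
        ≤ ∫ ξ : ℝ, f |ξ| := integral_mono_of_nonneg (Filter.Eventually.of_forall (hnonneg s)) hB
          (Filter.Eventually.of_forall (key s))
      _ = K * |h|^(2*H) := hval
  have houter := intervalIntegral.norm_integral_le_of_norm_le_const
    (C := K * |h|^(2*H)) (a := (0:ℝ)) (b := t) (fun s _ => hinner s)
  have hrp : (0:ℝ) ≤ |h|^(2*H) := Real.rpow_nonneg (abs_nonneg h) _
  calc (∫ s in (0:ℝ)..t, ∫ ξ : ℝ,
        (1 - Real.cos (h * ξ)) * (Real.sin ((t-s) * |ξ|) / |ξ|)^2 * |ξ| ^ (1 - 2*H))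
      ≤ ‖∫ s in (0:ℝ)..t, ∫ ξ : ℝ,
        (1 - Real.cos (h * ξ)) * (Real.sin ((t-s) * |ξ|) / |ξ|)^2 * |ξ| ^ (1 - 2*H)‖ :=
        le_abs_self _
    _ ≤ K * |h|^(2*H) * |t - 0| := houter
    _ = K * |h|^(2*H) * t := by rw [sub_zero, abs_of_pos ht0]
    _ ≤ K * T * |h|^(2*H) := by nlinarith [mul_le_mul_of_nonneg_left htT (mul_nonneg hK.le hrp)]
end
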